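/- Let S and A be nonempty finite types and γ ∈ [0,1). Consider two finite discounted MDPs φ = (P,r) and ψ = (P',r') on (S,A) with the same discount γ, and a deterministic policy π : S → A. Suppose V : S → ℝ satisfies V(s) = r(s,π(s)) + γ·∑_{s'} P(s,π(s),s')·V(s') for all s, and V' : S → ℝ satisfies V'(s) = r'(s,π(s)) + γ·∑_{s'} P'(s,π(s),s')·V'(s') for all s. Define Q(s,a) = r(s,a) + γ·∑_{s'} P(s,a,s')·V(s') and Q'(s,a) = r'(s,a) + γ·∑_{s'} P'(s,a,s')·V'(s'). If for some state-action pair (s,a) one has Q'(s,a) > V'(s), then V(s) − Q(s,a) < |r'(s,a) − r(s,a)| + γ·|∑_{s'} (P'(s,a,s') − P(s,a,s'))·V(s')| + ((1+γ)/(1−γ)) · max_{s''∈S} ( |r'(s'',π(s'')) − r(s'',π(s''))| + γ·|∑_{s'} (P'(s'',π(s''),s') − P(s'',π(s''),s'))·V(s')| ). -/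

import Mathlib

/-- Quantitative suboptimality-gap inequality: if in the alternative MDP
`ψ = (P',r')` the action `a` is improving for policy `π` at state `s`
(`Q'(s,a) > V'(s)`), then the gap `V(s) − Q(s,a)` in `φ = (P,r)` is bounded by
the deviations between `ψ` and `φ`. -/
theorem suboptimality_gap_bound {S A : Type*}
    [Fintype S] [Nonempty S] [Fintype A] [Nonempty A]
    (γ : ℝ) (hγ0 : 0 ≤ γ) (hγ1 : γ < 1)
    (P P' : S → A → S → ℝ) (r r' : S → A → ℝ)
    (hP : ∀ s a s', 0 ≤ P s a s') (hPsum : ∀ s a, ∑ s', P s a s' = 1)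
    (hP' : ∀ s a s', 0 ≤ P' s a s') (hP'sum : ∀ s a, ∑ s', P' s a s' = 1)
    (π : S → A) (V V' : S → ℝ)
    (hV : ∀ s, V s = r s (π s) + γ * ∑ s', P s (π s) s' * V s')
    (hV' : ∀ s, V' s = r' s (π s) + γ * ∑ s', P' s (π s) s' * V' s')
    (Q Q' : S → A → ℝ)
    (hQ : ∀ s a, Q s a = r s a + γ * ∑ s', P s a s' * V s')
    (hQ' : ∀ s a, Q' s a = r' s a + γ * ∑ s', P' s a s' * V' s')
    (s : S) (a : A) (himp : Q' s a > V' s) :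
    V s - Q s a <
      |r' s a - r s a| + γ * |∑ s', (P' s a s' - P s a s') * V s'| +
        ((1 + γ) / (1 - γ)) *
          Finset.univ.sup' Finset.univ_nonempty
            (fun s'' => |r' s'' (π s'') - r s'' (π s'')| +
              γ * |∑ s', (P' s'' (π s'') s' - P s'' (π s'') s') * V s'|) := by
  have hγ' : (0:ℝ) < 1 - γ := by linarith
  set D : S → ℝ := fun s'' => |r' s'' (π s'') - r s'' (π s'')| +
      γ * |∑ s', (P' s'' (π s'') s' - P s'' (π s'') s') * V s'| with hDdef
  set M := Finset.univ.sup' Finset.univ_nonempty D with hMdef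
  set Δ : S → ℝ := fun x => V' x - V x with hΔdef
  set N := Finset.univ.sup' Finset.univ_nonempty (fun x => |Δ x|) with hNdef
  have hNle : ∀ x, |Δ x| ≤ N := fun x => Finset.le_sup' (fun x => |Δ x|) (Finset.mem_univ x)
  have hDle : ∀ x, D x ≤ M := fun x => Finset.le_sup' D (Finset.mem_univ x)
  -- algebraic identity
  have key : ∀ (x : S) (b : A),
      (r' x b + γ * ∑ s', P' x b s' * V' s') - (r x b + γ * ∑ s', P x b s' * V s')
      = (r' x b - r x b) + γ * (∑ s', (P' x b s' - P x b s') * V s')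
        + γ * ∑ s', P' x b s' * Δ s' := by
    intro x b
    have h : ∑ s', P' x b s' * V' s' - ∑ s', P x b s' * V s'
        = (∑ s', (P' x b s' - P x b s') * V s') + ∑ s', P' x b s' * Δ s' := by
      rw [← Finset.sum_add_distrib, ← Finset.sum_sub_distrib]
      refine Finset.sum_congr rfl fun s' _ => ?_
      simp only [hΔdef]; ring
    calc (r' x b + γ * ∑ s', P' x b s' * V' s') - (r x b + γ * ∑ s', P x b s' * V s')
        = (r' x b - r x b)
          + γ * ((∑ s', P' x b s' * V' s') - ∑ s', P x b s' * V s') := by ring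
      _ = _ := by rw [h]; ring
  -- bound on the drift term
  have drift : ∀ (x : S) (b : A), |γ * ∑ s', P' x b s' * Δ s'| ≤ γ * N := by
    intro x b
    rw [abs_mul, abs_of_nonneg hγ0]
    refine mul_le_mul_of_nonneg_left ?_ hγ0
    calc |∑ s', P' x b s' * Δ s'| ≤ ∑ s', |P' x b s' * Δ s'| :=
          Finset.abs_sum_le_sum_abs _ _
      _ ≤ ∑ s', P' x b s' * N := by
          refine Finset.sum_le_sum fun i _ => ?_
          rw [abs_mul, abs_of_nonneg (hP' x b i)]
          exact mul_le_mul_of_nonneg_left (hNle i) (hP' x b i)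
      _ = N := by rw [← Finset.sum_mul, hP'sum, one_mul]
  -- bound N
  have hNM : N * (1 - γ) ≤ M := by
    obtain ⟨x0, -, hx0⟩ :=
      Finset.exists_mem_eq_sup' (Finset.univ_nonempty (α := S)) (fun x => |Δ x|)
    have hdx : Δ x0 = (r' x0 (π x0) + γ * ∑ s', P' x0 (π x0) s' * V' s')
        - (r x0 (π x0) + γ * ∑ s', P x0 (π x0) s' * V s') := by
      simp only [hΔdef]; rw [← hV, ← hV']
    have h1 : |Δ x0| ≤ D x0 + γ * N := by
      rw [hdx, key x0 (π x0)]
      calc |(r' x0 (π x0) - r x0 (π x0))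
            + γ * (∑ s', (P' x0 (π x0) s' - P x0 (π x0) s') * V s')
            + γ * ∑ s', P' x0 (π x0) s' * Δ s'|
          ≤ |(r' x0 (π x0) - r x0 (π x0))
            + γ * (∑ s', (P' x0 (π x0) s' - P x0 (π x0) s') * V s')|
            + |γ * ∑ s', P' x0 (π x0) s' * Δ s'| := abs_add_le _ _
        _ ≤ (|r' x0 (π x0) - r x0 (π x0)|
            + |γ * (∑ s', (P' x0 (π x0) s' - P x0 (π x0) s') * V s')|)
            + γ * N := add_le_add (abs_add_le _ _) (drift x0 (π x0))
        _ ≤ D x0 + γ * N := by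
            simp only [hDdef, abs_mul, abs_of_nonneg hγ0, le_refl]
    have h2 : N ≤ D x0 + γ * N := by
      exact hx0.trans_le h1
    nlinarith [hDle x0]
  -- bound on |Q' s a - Q s a|
  have hQQ : |Q' s a - Q s a| ≤ |r' s a - r s a|
      + γ * |∑ s', (P' s a s' - P s a s') * V s'| + γ * N := by
    rw [hQ, hQ', key s a]
    calc |(r' s a - r s a) + γ * (∑ s', (P' s a s' - P s a s') * V s')
          + γ * ∑ s', P' s a s' * Δ s'|
        ≤ |(r' s a - r s a) + γ * (∑ s', (P' s a s' - P s a s') * V s')|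
          + |γ * ∑ s', P' s a s' * Δ s'| := abs_add_le _ _
      _ ≤ (|r' s a - r s a| + |γ * (∑ s', (P' s a s' - P s a s') * V s')|)
          + γ * N := add_le_add (abs_add_le _ _) (drift s a)
      _ = _ := by rw [abs_mul, abs_of_nonneg hγ0]
  have hNnonneg : 0 ≤ N := le_trans (abs_nonneg _) (hNle (Classical.arbitrary S))
  have hfinal : (1 + γ) * N ≤ ((1 + γ) / (1 - γ)) * M := by
    rw [div_mul_eq_mul_div, le_div_iff₀ hγ']
    nlinarith
  have habs1 : - Δ s ≤ N := le_trans (neg_le_abs _) (hNle s)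
  have habs2 : Q' s a - Q s a ≤ |Q' s a - Q s a| := le_abs_self _
  have hdec : V s - Q s a = (- Δ s) + (V' s - Q' s a) + (Q' s a - Q s a) := by
    simp only [hΔdef]; ring
  have : V s - Q s a < N + (|r' s a - r s a|
      + γ * |∑ s', (P' s a s' - P s a s') * V s'| + γ * N) := by
    rw [hdec]
    have h3 : V' s - Q' s a < 0 := by linarith
    linarith [le_trans habs2 hQQ]
  calc V s - Q s a < N + (|r' s a - r s a|
        + γ * |∑ s', (P' s a s' - P s a s') * V s'| + γ * N) := this
    _ = |r' s a - r s a| + γ * |∑ s', (P' s a s' - P s a s') * V s'|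
        + (1 + γ) * N := by ring
    _ ≤ _ := by
        rw [hMdef] at hfinal
        exact add_le_add_right hfinal _
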